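/- If D is a distribution on a graph G and t is a vertex with wt_t(D) < 1, then t is not reachable from D by any finite sequence of pegging moves. -/
import Mathlib


open SimpleGraph Finset

variable {V : Type*} {W : Type*}

/-- A pegging move: remove pegs from adjacent pegged vertices `u, v`,
place a peg on an empty vertex `w` adjacent to `v`. -/
def PegMove {V : Type*} (G : SimpleGraph V) [DecidableEq V] (D D' : Finset V) : Prop :=
  ∃ u v w : V, G.Adj u v ∧ G.Adj v w ∧ u ∈ D ∧ v ∈ D ∧ w ∉ D ∧
    D' = insert w ((D.erase u).erase v)

/-- The reach of a distribution: all vertices reachable by a finite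
sequence of pegging moves. -/
def PegReach {V : Type*} (G : SimpleGraph V) [DecidableEq V] (D : Finset V) : Set V :=
  {t | ∃ D' : Finset V, Relation.ReflTransGen (PegMove G) D D' ∧ t ∈ D'}

/-- The pegging number: least positive `k` such that every distribution of
`k` pegs has full reach. -/
noncomputable def PeggingNumber {V : Type*} (G : SimpleGraph V) [DecidableEq V] : ℕ :=
  sInf {k | 0 < k ∧ ∀ D : Finset V, D.card = k → PegReach G D = Set.univ}

/-- The optimal pegging number: least positive `k` such that some distribution of
`k` pegs has full reach. -/
noncomputable def OptPeggingNumber {V : Type*} (G : SimpleGraph V) [DecidableEq V] : ℕ :=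
  sInf {k | 0 < k ∧ ∃ D : Finset V, D.card = k ∧ PegReach G D = Set.univ}

/-- Weight of a distribution with respect to a target vertex `t`,
with `σ = (√5 - 1)/2`. -/
noncomputable def pegWeight {V : Type*} (G : SimpleGraph V) (D : Finset V) (t : V) : ℝ :=
  ∑ u ∈ D, ((Real.sqrt 5 - 1) / 2) ^ (G.dist u t)

private lemma sigma_pos : (0:ℝ) < (Real.sqrt 5 - 1) / 2 := by
  nlinarith [Real.sq_sqrt (by norm_num : (5:ℝ) ≥ 0), Real.sqrt_nonneg 5]

private lemma sigma_lt_one : (Real.sqrt 5 - 1) / 2 < 1 := by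
  nlinarith [Real.sq_sqrt (by norm_num : (5:ℝ) ≥ 0), Real.sqrt_nonneg 5]

private lemma sigma_sq : ((Real.sqrt 5 - 1) / 2) ^ 2 + (Real.sqrt 5 - 1) / 2 = 1 := by
  have := Real.sq_sqrt (by norm_num : (5:ℝ) ≥ 0)
  nlinarith [Real.sqrt_nonneg 5]

private lemma key_pow (a b c : ℕ) (hb : b ≤ c + 1) (ha : a ≤ b + 1) :
    ((Real.sqrt 5 - 1) / 2) ^ c ≤ ((Real.sqrt 5 - 1) / 2) ^ a + ((Real.sqrt 5 - 1) / 2) ^ b := by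
  set s : ℝ := (Real.sqrt 5 - 1) / 2 with hs
  have h0 : (0:ℝ) ≤ s := le_of_lt sigma_pos
  have h1 : s ≤ 1 := le_of_lt sigma_lt_one
  match b with
  | 0 =>
    have : s ^ c ≤ 1 := pow_le_one₀ h0 h1
    have : (0:ℝ) ≤ s ^ a := pow_nonneg h0 a
    simp only [pow_zero]
    linarith [pow_le_one₀ h0 h1 (n := c)]
  | Nat.succ k =>
    have hck : k ≤ c := by omega
    have h2 : s ^ c ≤ s ^ k := pow_le_pow_of_le_one h0 h1 hck
    have h3 : s ^ k = s ^ (k + 2) + s ^ (k + 1) := by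
      have : s ^ k * (s ^ 2 + s) = s ^ k * 1 := by rw [sigma_sq]
      calc s ^ k = s ^ k * (s ^ 2 + s) := by rw [sigma_sq]; ring
        _ = s ^ (k + 2) + s ^ (k + 1) := by ring
    have h4 : s ^ a ≥ s ^ (k + 2) := pow_le_pow_of_le_one h0 h1 (by omega)
    simp only [Nat.succ_eq_add_one]
    linarith

private lemma dist_succ_le {V : Type*} (G : SimpleGraph V) {x y t : V}
    (hxy : G.Adj x y) (hr : G.Reachable y t) : G.dist x t ≤ G.dist y t + 1 := by
  obtain ⟨p, hp⟩ := hr.exists_walk_length_eq_dist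
  have := SimpleGraph.dist_le (Walk.cons hxy p)
  simpa [hp] using this

private lemma pegWeight_le_of_move {V : Type*} (G : SimpleGraph V) [DecidableEq V]
    {D D' : Finset V} (t : V) (hm : PegMove G D D') :
    pegWeight G D' t ≤ pegWeight G D t := by
  obtain ⟨u, v, w, huv, hvw, hu, hv, hw, hD'⟩ := hm
  set s : ℝ := (Real.sqrt 5 - 1) / 2 with hs
  have hne : u ≠ v := huv.ne
  have hvD : v ∈ (D.erase u) := Finset.mem_erase.mpr ⟨hne.symm, hv⟩
  have hwE : w ∉ ((D.erase u).erase v) := fun hmem =>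
    hw (Finset.mem_of_mem_erase (Finset.mem_of_mem_erase hmem))
  have hsum' : pegWeight G D' t
      = s ^ (G.dist w t) + ∑ x ∈ ((D.erase u).erase v), s ^ (G.dist x t) := by
    rw [hD', pegWeight, Finset.sum_insert hwE]
  have hsum : pegWeight G D t
      = s ^ (G.dist u t) + (s ^ (G.dist v t)
        + ∑ x ∈ ((D.erase u).erase v), s ^ (G.dist x t)) := by
    rw [pegWeight, ← Finset.add_sum_erase _ _ hu, ← Finset.add_sum_erase _ _ hvD]
  rw [hsum', hsum]
  have hkey : s ^ (G.dist w t) ≤ s ^ (G.dist u t) + s ^ (G.dist v t) := by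
    by_cases hr : G.Reachable v t
    · exact key_pow _ _ _ (dist_succ_le G hvw (hvw.symm.reachable.trans hr))
        (dist_succ_le G huv hr)
    · have h1 : G.dist v t = 0 := SimpleGraph.dist_eq_zero_of_not_reachable hr
      have h2 : G.dist u t = 0 := SimpleGraph.dist_eq_zero_of_not_reachable
        (fun h => hr (huv.symm.reachable.trans h))
      have h3 : G.dist w t = 0 := SimpleGraph.dist_eq_zero_of_not_reachable
        (fun h => hr (hvw.reachable.trans h))
      rw [h1, h2, h3]; norm_num
  linarith


theorem not_reachable_of_pegWeight_lt_one {V : Type*} (G : SimpleGraph V) [DecidableEq V]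
    (D : Finset V) (t : V) (h : pegWeight G D t < 1) :
    t ∉ PegReach G D := by
  rintro ⟨D', hrel, ht⟩
  have hle : pegWeight G D' t ≤ pegWeight G D t := by
    clear ht h
    induction hrel with
    | refl => exact le_refl _
    | tail _ hstep ih => exact le_trans (pegWeight_le_of_move G t hstep) ih
  have hge : (1:ℝ) ≤ pegWeight G D' t := by
    rw [pegWeight]
    calc (1:ℝ) = ((Real.sqrt 5 - 1) / 2) ^ (G.dist t t) := by
          rw [SimpleGraph.dist_self, pow_zero]
      _ ≤ ∑ x ∈ D', ((Real.sqrt 5 - 1) / 2) ^ (G.dist x t) := Finset.single_le_sum (f := fun x => ((Real.sqrt 5 - 1) / 2) ^ (G.dist x t))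
          (fun x _ => pow_nonneg (le_of_lt sigma_pos) _) ht
  linarith
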